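/- Let τ_c > τ_f > 0, l > 0, v_f > 0 be reals and set q_max = 1/(τ_f + l/v_f). Then there is no assignment of reals C, r_1, g_1, r_2, g_2 ≥ 0, positive integers L_1, L_2, reals T_1, T_2 ≥ 0, and reals τ̲, τ̄ ≥ τ_c satisfying simultaneously: C = r_i + g_i and L_i = q_max·g_i and q_max·(r_i + g_i) − L_i = 0 and T_i = (L_i − 1)·τ_f + L_i·(l/v_f) for i = 1,2, together with C = τ̲ + τ̄ + T_1 + T_2. That is, model M1 is infeasible when two movements sharing one conflict point both arrive at the saturation flow rate q_max. -/

import Mathlib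

/-- Model M1 is infeasible when two movements sharing a single conflict point
both arrive at the saturation flow rate `qmax = 1 / (τf + l / vf)`: no choice
of cycle `C`, red/green times, positive-integer platoon sizes, occupancy times,
and departure–arrival headways `≥ τc` can satisfy all constraints. -/
theorem stmt_2 (τc τf l vf : ℝ)
    (hτf : 0 < τf) (hτ : τf < τc) (hl : 0 < l) (hvf : 0 < vf) :
    ¬ ∃ (C r₁ g₁ r₂ g₂ : ℝ) (L₁ L₂ : ℕ) (T₁ T₂ τlo τhi : ℝ),
      0 ≤ r₁ ∧ 0 ≤ g₁ ∧ 0 ≤ r₂ ∧ 0 ≤ g₂ ∧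
      0 < L₁ ∧ 0 < L₂ ∧ 0 ≤ T₁ ∧ 0 ≤ T₂ ∧
      τc ≤ τlo ∧ τc ≤ τhi ∧
      C = r₁ + g₁ ∧ C = r₂ + g₂ ∧
      (L₁ : ℝ) = (1 / (τf + l / vf)) * g₁ ∧
      (L₂ : ℝ) = (1 / (τf + l / vf)) * g₂ ∧
      (1 / (τf + l / vf)) * (r₁ + g₁) - (L₁ : ℝ) = 0 ∧
      (1 / (τf + l / vf)) * (r₂ + g₂) - (L₂ : ℝ) = 0 ∧
      T₁ = ((L₁ : ℝ) - 1) * τf + (L₁ : ℝ) * (l / vf) ∧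
      T₂ = ((L₂ : ℝ) - 1) * τf + (L₂ : ℝ) * (l / vf) ∧
      C = τlo + τhi + T₁ + T₂ := by
  rintro ⟨C, r₁, g₁, r₂, g₂, L₁, L₂, T₁, T₂, τlo, τhi,
    hr₁, hg₁, hr₂, hg₂, hL₁, hL₂, hT₁0, hT₂0, hlo, hhi,
    hC₁, hC₂, hL₁e, hL₂e, hq₁, hq₂, hT₁, hT₂, hcyc⟩
  set h := τf + l / vf with hh
  have hhpos : 0 < h := by positivity
  have hC1 : C = (L₁ : ℝ) * h := by
    have : (1 / h) * C = (L₁ : ℝ) := by rw [hC₁]; linarith [hq₁]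
    field_simp at this; linarith
  have hC2 : C = (L₂ : ℝ) * h := by
    have : (1 / h) * C = (L₂ : ℝ) := by rw [hC₂]; linarith [hq₂]
    field_simp at this; linarith
  have hT1 : T₁ = C - τf := by rw [hT₁, hC1, hh]; ring_nf
  have hT2 : T₂ = C - τf := by rw [hT₂, hC2, hh]; ring_nf
  have hCge : 0 ≤ C := by linarith
  linarith
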